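/- Let Z_1,…,Z_n be i.i.d. real random variables and let F̂_n(y) = (1/n)Σ_{i=1}^n 1{Z_i ≤ y} be the empirical CDF and F the true CDF. Then for any ε > 0, P(sup_y |F̂_n(y) − F(y)| > ε) ≤ 2(n+1)exp(−2nε²). -/

import Mathlib

open MeasureTheory ProbabilityTheory Real
open scoped ENNReal

section aux

lemma hoeffding_key' (q : ℝ) (h0 : 0 ≤ q) (h1 : q ≤ 1) (t : ℝ) :
    1 + q * (Real.exp t - 1) ≤ Real.exp (t * q + t ^ 2 / 8) := by
  rcases eq_or_lt_of_le h0 with rfl | hq0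
  · simpa using Real.one_le_exp (by positivity)
  rcases eq_or_lt_of_le h1 with rfl | hq1
  · simp only [one_mul]
    have : Real.exp t ≤ Real.exp (t * 1 + t ^ 2 / 8) :=
      Real.exp_le_exp.2 (by nlinarith [sq_nonneg t])
    linarith
  -- now 0 < q < 1
  have hD : ∀ t : ℝ, (0:ℝ) < 1 - q + q * Real.exp t := fun t => by
    have := Real.exp_pos t
    nlinarith
  set D : ℝ → ℝ := fun t => 1 - q + q * Real.exp t with hDdef
  set g : ℝ → ℝ := fun t => q + t / 4 - q * Real.exp t / D t with hgdef
  set f : ℝ → ℝ := fun t => t * q + t ^ 2 / 8 - Real.log (D t) with hfdef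
  have hDderiv : ∀ t, HasDerivAt D (q * Real.exp t) t := by
    intro t
    exact ((Real.hasDerivAt_exp t).const_mul q).const_add (1 - q)
  have hgderiv : ∀ t, HasDerivAt g (1/4 - q * (1-q) * Real.exp t / (D t) ^ 2) t := by
    intro t
    have h1 : HasDerivAt (fun t => q * Real.exp t) (q * Real.exp t) t :=
      (Real.hasDerivAt_exp t).const_mul q
    have h2 : HasDerivAt (fun t => q * Real.exp t / D t)
        ((q * Real.exp t * D t - q * Real.exp t * (q * Real.exp t)) / (D t) ^ 2) t :=
      h1.div (hDderiv t) (hD t).ne'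
    have h3 : HasDerivAt (fun t : ℝ => q + t / 4) (1/4) t := by
      simpa using ((hasDerivAt_id t).div_const 4).const_add q
    have := h3.sub h2
    refine this.congr_deriv ?_
    have : q * Real.exp t * D t - q * Real.exp t * (q * Real.exp t)
        = q * (1-q) * Real.exp t := by
      simp only [hDdef]; ring
    rw [this]
  have hgmono : Monotone g := by
    apply monotone_of_deriv_nonneg
    · exact fun t => (hgderiv t).differentiableAt
    · intro t
      rw [(hgderiv t).deriv]
      have hb : q * (1-q) * Real.exp t ≤ (D t)^2 / 4 := by
        have := Real.exp_pos t
        simp only [hDdef]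
        nlinarith [sq_nonneg (1 - q - q * Real.exp t)]
      have : q * (1-q) * Real.exp t / (D t)^2 ≤ 1/4 := by
        rw [div_le_iff₀ (pow_pos (hD t) 2)]
        linarith
      linarith
  have hg0 : g 0 = 0 := by
    simp only [hgdef, hDdef, Real.exp_zero]
    field_simp
    ring
  have hfderiv : ∀ t, HasDerivAt f (g t) t := by
    intro t
    have hlog : HasDerivAt (fun t => Real.log (D t)) (q * Real.exp t / D t) t :=
      (hDderiv t).log (hD t).ne'
    have h3 : HasDerivAt (fun t : ℝ => t * q + t ^ 2 / 8) (q + t/4) t := by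
      have h4 : HasDerivAt (fun t : ℝ => t * q) q t := by
        simpa using (hasDerivAt_id t).mul_const q
      have h5 : HasDerivAt (fun t : ℝ => t ^ 2 / 8) (t/4) t := by
        have := ((hasDerivAt_pow 2 t)).div_const 8
        refine this.congr_deriv ?_; rw [show (2:ℕ)-1 = 1 from rfl]; push_cast; ring
      exact h4.add h5
    have := h3.sub hlog
    exact this
  have hf0 : f 0 = 0 := by
    simp [hfdef, hDdef]
  have hfnonneg : ∀ t, 0 ≤ f t := by
    intro t
    rcases le_total 0 t with ht | ht
    · have : MonotoneOn f (Set.Ici 0) := by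
        apply monotoneOn_of_deriv_nonneg (convex_Ici 0)
        · exact (fun t _ => ((hfderiv t).differentiableAt).continuousAt.continuousWithinAt)
        · exact fun t _ => ((hfderiv t).differentiableAt).differentiableWithinAt
        · intro x hx
          rw [(hfderiv x).deriv]
          rw [interior_Ici] at hx
          have := hgmono (le_of_lt hx)
          rw [hg0] at this; exact this
      have := this (Set.self_mem_Ici) (Set.mem_Ici.2 ht) ht
      rw [hf0] at this; exact this
    · have : AntitoneOn f (Set.Iic 0) := by
        apply antitoneOn_of_deriv_nonpos (convex_Iic 0)
        · exact (fun t _ => ((hfderiv t).differentiableAt).continuousAt.continuousWithinAt)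
        · exact fun t _ => ((hfderiv t).differentiableAt).differentiableWithinAt
        · intro x hx
          rw [(hfderiv x).deriv]
          have hx0 : x ≤ 0 := le_of_lt (by simpa using hx)
          have := hgmono hx0
          rw [hg0] at this; exact this
      have := this (Set.mem_Iic.2 ht) (Set.self_mem_Iic) ht
      rw [hf0] at this; exact this
  have := hfnonneg t
  have hexp : Real.log (D t) ≤ t * q + t ^ 2 / 8 := by
    simp only [hfdef] at this; linarith
  have h2 : D t ≤ Real.exp (t * q + t^2/8) := by
    show 1 - q + q * Real.exp t ≤ _
    rw [← Real.exp_log (hD t)]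
    exact Real.exp_le_exp.2 hexp
  have : 1 + q * (Real.exp t - 1) = D t := by simp only [hDdef]; ring
  linarith

variable {Ω : Type*} [MeasurableSpace Ω] (μ : Measure Ω) [IsProbabilityMeasure μ]

lemma chernoff_upper' (n : ℕ) (X : Fin n → Ω → ℝ) (hXm : ∀ i, Measurable (X i))
    (hind : iIndepFun X μ)
    (h01 : ∀ i ω, X i ω = 0 ∨ X i ω = 1)
    (p : ℝ) (hp : ∀ i, ∫ ω, X i ω ∂μ ≤ p)
    (ε : ℝ) (hε : 0 < ε) :
    μ {ω | (n:ℝ) * (p + ε) ≤ ∑ i, X i ω} ≤ ENNReal.ofReal (Real.exp (-2 * n * ε^2)) := by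
  set t : ℝ := 4 * ε with ht_def
  have ht : 0 ≤ t := by positivity
  -- integrability of exp(t * X i)
  have hXint : ∀ i, Integrable (X i) μ := by
    intro i
    refine (integrable_const (1:ℝ)).mono' ((hXm i).aestronglyMeasurable) ?_
    filter_upwards with ω
    rcases h01 i ω with h | h <;> simp [h]
  have hint : ∀ i, Integrable (fun ω => Real.exp (t * X i ω)) μ := by
    intro i
    refine (integrable_const (max 1 (Real.exp t))).mono'
      ((Real.measurable_exp.comp ((hXm i).const_mul t)).aestronglyMeasurable) ?_
    filter_upwards with ω
    rcases h01 i ω with h | h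
    · simp [h, abs_of_nonneg (Real.exp_nonneg _)]
    · simp [h, abs_of_nonneg (Real.exp_nonneg _)]
  -- mean in [0,1]
  have hmean : ∀ i, 0 ≤ ∫ ω, X i ω ∂μ ∧ ∫ ω, X i ω ∂μ ≤ 1 := by
    intro i
    constructor
    · apply integral_nonneg
      intro ω; rcases h01 i ω with h | h <;> simp [h]
    · calc ∫ ω, X i ω ∂μ ≤ ∫ _, (1:ℝ) ∂μ := by
            apply integral_mono (hXint i) (integrable_const 1)
            intro ω; rcases h01 i ω with h | h <;> simp [h]
      _ = 1 := by simp
  -- mgf of each X i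
  have hmgf : ∀ i, mgf (X i) μ t ≤ Real.exp (t * p + t^2/8) := by
    intro i
    have hpt : (fun ω => Real.exp (t * X i ω)) = fun ω => 1 + (Real.exp t - 1) * X i ω := by
      funext ω
      rcases h01 i ω with h | h <;> simp [h]
    have : mgf (X i) μ t = 1 + (Real.exp t - 1) * ∫ ω, X i ω ∂μ := by
      rw [mgf, hpt]
      rw [integral_add (integrable_const 1) ((hXint i).const_mul _)]
      rw [MeasureTheory.integral_const_mul]; simp
    rw [this]
    calc 1 + (Real.exp t - 1) * ∫ ω, X i ω ∂μ
        ≤ Real.exp (t * (∫ ω, X i ω ∂μ) + t^2/8) := by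
          have := hoeffding_key' (∫ ω, X i ω ∂μ) (hmean i).1 (hmean i).2 t
          linarith
      _ ≤ Real.exp (t * p + t^2/8) := by
          apply Real.exp_le_exp.2
          have := mul_le_mul_of_nonneg_left (hp i) ht
          linarith
  -- mgf of sum
  have hsum_meas : Measurable (fun ω => ∑ i, X i ω) := by
    apply Finset.measurable_sum
    exact fun i _ => hXm i
  have hint_sum : Integrable (fun ω => Real.exp (t * (∑ i, X i ω))) μ := by
    refine (integrable_const (Real.exp (t * n))).mono'
      ((Real.measurable_exp.comp (hsum_meas.const_mul t)).aestronglyMeasurable) ?_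
    filter_upwards with ω
    rw [Real.norm_eq_abs, abs_of_nonneg (Real.exp_nonneg _), Real.exp_le_exp]
    have : ∑ i, X i ω ≤ (n:ℝ) := by
      calc ∑ i, X i ω ≤ ∑ _i : Fin n, (1:ℝ) := by
            apply Finset.sum_le_sum
            intro i _; rcases h01 i ω with h | h <;> simp [h]
        _ = n := by simp
    exact mul_le_mul_of_nonneg_left this ht
  have hmgf_sum : mgf (fun ω => ∑ i, X i ω) μ t ≤ Real.exp (t * p + t^2/8) ^ n := by
    have heq : (fun ω => ∑ i, X i ω) = ∑ i, X i := by
      funext ω; simp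
    rw [heq, hind.mgf_sum hXm Finset.univ]
    calc ∏ i, mgf (X i) μ t ≤ ∏ _i : Fin n, Real.exp (t * p + t^2/8) := by
          apply Finset.prod_le_prod (fun i _ => mgf_nonneg) (fun i _ => hmgf i)
      _ = Real.exp (t * p + t^2/8) ^ n := by simp
  have hmarkov := measure_ge_le_exp_mul_mgf (μ := μ) (X := fun ω => ∑ i, X i ω)
      ((n:ℝ) * (p + ε)) ht hint_sum
  have hfinal : (μ {ω | (n:ℝ) * (p + ε) ≤ ∑ i, X i ω}).toReal ≤ Real.exp (-2 * n * ε^2) := by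
    calc (μ {ω | (n:ℝ) * (p + ε) ≤ ∑ i, X i ω}).toReal
        ≤ Real.exp (-t * ((n:ℝ) * (p + ε))) * mgf (fun ω => ∑ i, X i ω) μ t := hmarkov
      _ ≤ Real.exp (-t * ((n:ℝ) * (p + ε))) * Real.exp (t * p + t^2/8) ^ n :=
          mul_le_mul_of_nonneg_left hmgf_sum (Real.exp_nonneg _)
      _ = Real.exp (-t * ((n:ℝ) * (p + ε)) + n * (t * p + t^2/8)) := by
          rw [← Real.exp_nat_mul, ← Real.exp_add]
      _ = Real.exp (-2 * n * ε^2) := by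
          congr 1
          rw [ht_def]; ring
  exact (ENNReal.le_ofReal_iff_toReal_le (measure_ne_top μ _) (Real.exp_nonneg _)).2 hfinal

lemma chernoff_lower' (n : ℕ) (X : Fin n → Ω → ℝ) (hXm : ∀ i, Measurable (X i))
    (hind : iIndepFun X μ)
    (h01 : ∀ i ω, X i ω = 0 ∨ X i ω = 1)
    (p : ℝ) (hp : ∀ i, p ≤ ∫ ω, X i ω ∂μ)
    (ε : ℝ) (hε : 0 < ε) :
    μ {ω | ∑ i, X i ω ≤ (n:ℝ) * (p - ε)} ≤ ENNReal.ofReal (Real.exp (-2 * n * ε^2)) := by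
  set Y : Fin n → Ω → ℝ := fun i ω => 1 - X i ω with hY_def
  have hYm : ∀ i, Measurable (Y i) := fun i => (measurable_const.sub (hXm i))
  have hYind : iIndepFun Y μ := by
    have : ∀ i, Y i = (fun x : ℝ => 1 - x) ∘ X i := fun i => rfl
    rw [funext this]
    exact hind.comp _ (fun i => measurable_const.sub measurable_id)
  have hY01 : ∀ i ω, Y i ω = 0 ∨ Y i ω = 1 := by
    intro i ω
    rcases h01 i ω with h | h
    · right; simp [hY_def, h]
    · left; simp [hY_def, h]
  have hXint : ∀ i, Integrable (X i) μ := by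
    intro i
    refine (integrable_const (1:ℝ)).mono' ((hXm i).aestronglyMeasurable) ?_
    filter_upwards with ω
    rcases h01 i ω with h | h <;> simp [h]
  have hYp : ∀ i, ∫ ω, Y i ω ∂μ ≤ 1 - p := by
    intro i
    have : ∫ ω, Y i ω ∂μ = 1 - ∫ ω, X i ω ∂μ := by
      rw [hY_def]
      simp only
      rw [integral_sub (integrable_const 1) (hXint i)]
      simp
    rw [this]
    linarith [hp i]
  have := chernoff_upper' μ n Y hYm hYind hY01 (1 - p) hYp ε hε
  refine le_trans (measure_mono ?_) this
  intro ω hω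
  simp only [Set.mem_setOf_eq] at hω ⊢
  have hsum : ∑ i, Y i ω = n - ∑ i, X i ω := by
    simp [hY_def, Finset.sum_sub_distrib]
  rw [hsum]
  have : (n:ℝ) * (1 - p + ε) = n - n * (p - ε) := by ring
  rw [this]
  linarith

end aux

theorem dkw_type_bound
    {Ω : Type*} [MeasurableSpace Ω] (μ : Measure Ω) [IsProbabilityMeasure μ]
    (n : ℕ) (hn : 0 < n)
    (Z : Fin n → Ω → ℝ) (hZ : ∀ i, Measurable (Z i))
    (hindep : iIndepFun Z μ)
    (hident : ∀ i, μ.map (Z i) = μ.map (Z ⟨0, hn⟩))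
    (F : ℝ → ℝ) (hF : ∀ y, F y = (μ {ω | Z ⟨0, hn⟩ ω ≤ y}).toReal)
    (ε : ℝ) (hε : 0 < ε) :
    (μ {ω | ε < ⨆ y : ℝ,
        |(1 / (n : ℝ)) * (∑ i, if Z i ω ≤ y then (1 : ℝ) else 0) - F y|}).toReal
      ≤ 2 * ((n : ℝ) + 1) * Real.exp (-2 * (n : ℝ) * ε ^ 2) := by
  classical
  have hn' : (0:ℝ) < n := Nat.cast_pos.2 hn
  set bnd : ℝ≥0∞ := ENNReal.ofReal (Real.exp (-2 * n * ε^2)) with hbnd_def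
  -- basic facts about F
  have hμZ : ∀ (i : Fin n) (y : ℝ), μ {ω | Z i ω ≤ y} = μ {ω | Z ⟨0, hn⟩ ω ≤ y} := by
    intro i y
    have h1 : μ {ω | Z i ω ≤ y} = μ.map (Z i) (Set.Iic y) := by
      rw [Measure.map_apply (hZ i) measurableSet_Iic]; rfl
    have h2 : μ {ω | Z ⟨0, hn⟩ ω ≤ y} = μ.map (Z ⟨0, hn⟩) (Set.Iic y) := by
      rw [Measure.map_apply (hZ _) measurableSet_Iic]; rfl
    rw [h1, h2, hident i]
  have hFmono : Monotone F := by
    intro a b hab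
    rw [hF a, hF b]
    exact ENNReal.toReal_mono (measure_ne_top μ _)
      (measure_mono fun ω hω => le_trans hω hab)
  have hF0 : ∀ y, 0 ≤ F y := fun y => by rw [hF y]; exact ENNReal.toReal_nonneg
  have hF1 : ∀ y, F y ≤ 1 := fun y => by
    rw [hF y]
    exact ENNReal.toReal_le_of_le_ofReal zero_le_one (by simpa using prob_le_one)
  have hFtop : ∀ c : ℝ, c < 1 → ∃ w : ℝ, c < F w := by
    intro c hc
    rcases lt_or_ge c 0 with hc0 | hc0
    · exact ⟨0, lt_of_lt_of_le hc0 (hF0 0)⟩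
    · have hmono : Monotone (fun m : ℕ => {ω | Z ⟨0, hn⟩ ω ≤ (m:ℝ)}) := by
        intro a b hab ω hω
        exact le_trans hω (Nat.cast_le.mpr hab : (a:ℝ) ≤ (b:ℝ))
      have huniv : (⋃ m : ℕ, {ω | Z ⟨0, hn⟩ ω ≤ (m:ℝ)}) = Set.univ := by
        ext ω
        simp only [Set.mem_iUnion, Set.mem_setOf_eq, Set.mem_univ, iff_true]
        obtain ⟨m, hm⟩ := exists_nat_ge (Z ⟨0, hn⟩ ω)
        exact ⟨m, hm⟩
      have htend := tendsto_measure_iUnion_atTop (μ := μ) hmono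
      simp only [huniv, measure_univ] at htend
      have hlt : ENNReal.ofReal c < 1 := by
        rw [← ENNReal.ofReal_one]
        exact ENNReal.ofReal_lt_ofReal_iff_of_nonneg hc0 |>.2 hc
      have := htend.eventually_const_lt hlt
      obtain ⟨m, hm⟩ := this.exists
      refine ⟨m, ?_⟩
      rw [hF]
      rw [← ENNReal.ofReal_lt_iff_lt_toReal hc0 (measure_ne_top μ _)] at *
      exact hm
  have hFbot : ∀ c : ℝ, 0 < c → ∃ w : ℝ, F w < c := by
    intro c hc
    have hanti : Antitone (fun m : ℕ => Z ⟨0, hn⟩ ⁻¹' Set.Iic (-(m:ℝ))) := by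
      intro a b hab ω hω
      exact le_trans (hω : Z ⟨0, hn⟩ ω ≤ -(b:ℝ)) (neg_le_neg (Nat.cast_le.mpr hab : (a:ℝ) ≤ (b:ℝ)))
    have hempty : (⋂ m : ℕ, Z ⟨0, hn⟩ ⁻¹' Set.Iic (-(m:ℝ))) = ∅ := by
      ext ω
      simp only [Set.mem_iInter, Set.mem_preimage, Set.mem_Iic,
        Set.mem_empty_iff_false, iff_false, not_forall]
      obtain ⟨m, hm⟩ := exists_nat_ge (-(Z ⟨0, hn⟩ ω))
      refine ⟨m+1, ?_⟩
      push_neg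
      push_cast
      linarith
    have htend := tendsto_measure_iInter_atTop (μ := μ)
      (fun m => ((hZ _) measurableSet_Iic).nullMeasurableSet) hanti ⟨0, measure_ne_top μ _⟩
    rw [hempty, measure_empty] at htend
    have hlt : (0:ℝ≥0∞) < ENNReal.ofReal c := ENNReal.ofReal_pos.2 hc
    obtain ⟨m, hm⟩ := (htend.eventually_lt_const hlt).exists
    refine ⟨-(m:ℝ), ?_⟩
    rw [hF]
    exact (ENNReal.lt_ofReal_iff_toReal_lt (measure_ne_top μ _)).1 hm
  -- the empirical sums
  have hSmono : ∀ (ω : Ω) {a b : ℝ}, a ≤ b →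
      (∑ i, if Z i ω ≤ a then (1:ℝ) else 0) ≤ ∑ i, if Z i ω ≤ b then (1:ℝ) else 0 := by
    intro ω a b hab
    apply Finset.sum_le_sum
    intro i _
    by_cases h : Z i ω ≤ a
    · simp [h, le_trans h hab]
    · by_cases h' : Z i ω ≤ b <;> simp [h, h']
  have hSrange : ∀ (ω : Ω) (y : ℝ), (0:ℝ) ≤ (∑ i, if Z i ω ≤ y then (1:ℝ) else 0)
      ∧ (∑ i, if Z i ω ≤ y then (1:ℝ) else 0) ≤ n := by
    intro ω y
    constructor
    · apply Finset.sum_nonneg; intro i _; positivity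
    · calc (∑ i, if Z i ω ≤ y then (1:ℝ) else 0) ≤ ∑ _i : Fin n, (1:ℝ) :=
          Finset.sum_le_sum fun i _ => by split <;> norm_num
        _ = n := by simp
  -- Chernoff for a fixed cutoff point
  have hXmeas : ∀ (z : ℝ) (i : Fin n), Measurable (fun ω => if Z i ω ≤ z then (1:ℝ) else 0) :=
    fun z i => Measurable.ite ((hZ i) measurableSet_Iic) measurable_const measurable_const
  have hXind : ∀ z : ℝ, iIndepFun
      (fun i => fun ω => if Z i ω ≤ z then (1:ℝ) else 0) μ := by
    intro z
    have : (fun (i : Fin n) => fun ω => if Z i ω ≤ z then (1:ℝ) else 0)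
        = fun i => (fun x : ℝ => if x ≤ z then (1:ℝ) else 0) ∘ Z i := rfl
    rw [this]
    exact hindep.comp _ (fun i =>
      Measurable.ite measurableSet_Iic measurable_const measurable_const)
  have hX01 : ∀ (z : ℝ) (i : Fin n) (ω : Ω),
      (if Z i ω ≤ z then (1:ℝ) else 0) = 0 ∨ (if Z i ω ≤ z then (1:ℝ) else 0) = 1 := by
    intro z i ω; split <;> simp
  have hXint : ∀ (z : ℝ) (i : Fin n),
      ∫ ω, (if Z i ω ≤ z then (1:ℝ) else 0) ∂μ = F z := by
    intro z i
    have heq : (fun ω => if Z i ω ≤ z then (1:ℝ) else 0)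
        = Set.indicator (Z i ⁻¹' Set.Iic z) (fun _ => (1:ℝ)) := by
      funext ω
      by_cases h : Z i ω ≤ z <;>
        simp [h, Set.indicator_apply, Set.mem_preimage, Set.mem_Iic]
    rw [heq, integral_indicator_const (1:ℝ) ((hZ i) measurableSet_Iic)]
    rw [hF z]
    have : μ (Z i ⁻¹' Set.Iic z) = μ {ω | Z ⟨0, hn⟩ ω ≤ z} := hμZ i z
    rw [measureReal_def, this]
    simp
  have hup : ∀ z : ℝ, ∀ k : ℕ, (n:ℝ) * (F z + ε) < k →
      μ {ω | (k:ℝ) ≤ ∑ i, if Z i ω ≤ z then (1:ℝ) else 0} ≤ bnd := by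
    intro z k hk
    refine le_trans (measure_mono ?_) (chernoff_upper' μ n _ (hXmeas z) (hXind z) (hX01 z)
      (F z) (fun i => le_of_eq (hXint z i)) ε hε)
    intro ω hω
    simp only [Set.mem_setOf_eq] at hω ⊢
    linarith
  have hdown : ∀ z : ℝ, ∀ k : ℕ, (k:ℝ) < (n:ℝ) * (F z - ε) →
      μ {ω | (∑ i, if Z i ω ≤ z then (1:ℝ) else 0) ≤ (k:ℝ)} ≤ bnd := by
    intro z k hk
    refine le_trans (measure_mono ?_) (chernoff_lower' μ n _ (hXmeas z) (hXind z) (hX01 z)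
      (F z) (fun i => ge_of_eq (hXint z i)) ε hε)
    intro ω hω
    simp only [Set.mem_setOf_eq] at hω ⊢
    linarith
  -- the union events
  set B : ℕ → Set Ω := fun k => {ω | ∃ y, F y < (k:ℝ)/n - ε ∧
    (k:ℝ) ≤ ∑ i, if Z i ω ≤ y then (1:ℝ) else 0} with hB_def
  set C : ℕ → Set Ω := fun k => {ω | ∃ y, (k:ℝ)/n + ε < F y ∧
    (∑ i, if Z i ω ≤ y then (1:ℝ) else 0) ≤ (k:ℝ)} with hC_def
  have hcover : {ω | ε < ⨆ y : ℝ,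
      |(1 / (n : ℝ)) * (∑ i, if Z i ω ≤ y then (1 : ℝ) else 0) - F y|}
      ⊆ ⋃ k ∈ Finset.range (n+1), (B k ∪ C k) := by
    intro ω hω
    simp only [Set.mem_setOf_eq] at hω
    obtain ⟨y, hy⟩ := exists_lt_of_lt_ciSup hω
    set k : ℕ := (Finset.univ.filter fun i => Z i ω ≤ y).card with hk_def
    have hkn : k ≤ n := le_trans (Finset.card_filter_le _ _) (by simp)
    have hsum : (∑ i, if Z i ω ≤ y then (1:ℝ) else 0) = (k:ℝ) := by
      rw [hk_def]; rw [Finset.sum_boole]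
    have hmem : k ∈ Finset.range (n+1) := Finset.mem_range.2 (Nat.lt_succ_of_le hkn)
    rw [hsum] at hy
    apply Set.mem_biUnion hmem
    rcases lt_abs.mp hy with h | h
    · left
      refine ⟨y, ?_, le_of_eq hsum.symm⟩
      have : (1 / (n:ℝ)) * k = k / n := by ring
      rw [this] at h
      linarith
    · right
      refine ⟨y, ?_, le_of_eq hsum⟩
      have : (1 / (n:ℝ)) * k = k / n := by ring
      rw [this] at h
      linarith
  -- bound each B k
  have hBk : ∀ k : ℕ, k ≤ n → μ (B k) ≤ bnd := by
    intro k hkn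
    set c : ℝ := (k:ℝ)/n - ε with hc_def
    set S : Set ℝ := {y | F y < c} with hS_def
    by_cases hS : S.Nonempty
    · have hc1 : c < 1 := by
        have : (k:ℝ)/n ≤ 1 := by
          rw [div_le_one hn']
          exact_mod_cast hkn
        rw [hc_def]; linarith
      obtain ⟨w, hw⟩ := hFtop c hc1
      have hbdd : BddAbove S := by
        refine ⟨w, fun y hy => ?_⟩
        by_contra hyw
        push_neg at hyw
        exact absurd (lt_of_le_of_lt (hFmono hyw.le) hy) (not_lt.2 hw.le)
      set T : ℝ := sSup S with hT_def
      have hlow : ∀ y, y < T → y ∈ S := by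
        intro y hy
        obtain ⟨y', hy'S, hyy'⟩ := exists_lt_of_lt_csSup hS hy
        exact lt_of_le_of_lt (hFmono hyy'.le) hy'S
      have hchern : ∀ z, z ∈ S → μ {ω | (k:ℝ) ≤ ∑ i, if Z i ω ≤ z then (1:ℝ) else 0} ≤ bnd := by
        intro z hz
        apply hup z k
        have : F z < c := hz
        have : (n:ℝ) * (F z + ε) < n * (c + ε) := by
          apply mul_lt_mul_of_pos_left _ hn'
          linarith
        calc (n:ℝ) * (F z + ε) < n * (c + ε) := this
          _ = k := by rw [hc_def]; field_simp; ring
      by_cases hT : T ∈ S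
      · refine le_trans (measure_mono ?_) (hchern T hT)
        intro ω hω
        obtain ⟨y, hyS, hyk⟩ := hω
        have hyT : y ≤ T := le_csSup hbdd hyS
        exact le_trans hyk (hSmono ω hyT)
      · set A : ℕ → Set Ω := fun m =>
          {ω | (k:ℝ) ≤ ∑ i, if Z i ω ≤ T - 1/(m+1) then (1:ℝ) else 0} with hA_def
        have hAmono : Monotone A := by
          intro a b hab ω hω
          refine le_trans hω (hSmono ω ?_)
          have : (1:ℝ)/(b+1) ≤ 1/(a+1) := by
            apply one_div_le_one_div_of_le (by positivity)
            exact_mod_cast add_le_add_left (Nat.cast_le.2 hab) 1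
          linarith
        have hsub : B k ⊆ ⋃ m, A m := by
          intro ω hω
          obtain ⟨y, hyS, hyk⟩ := hω
          have hyT : y < T := lt_of_le_of_ne (le_csSup hbdd hyS) (fun h => hT (h ▸ hyS))
          obtain ⟨m, hm⟩ := exists_nat_one_div_lt (sub_pos.2 hyT)
          refine Set.mem_iUnion.2 ⟨m, ?_⟩
          refine le_trans hyk (hSmono ω ?_)
          have : (1:ℝ)/(m+1) < T - y := hm
          linarith
        have htend := tendsto_measure_iUnion_atTop (μ := μ) hAmono
        refine le_trans (measure_mono hsub) (le_of_tendsto htend ?_)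
        filter_upwards with m
        apply hchern
        apply hlow
        have : (0:ℝ) < 1/((m:ℝ)+1) := by positivity
        linarith
    · have : B k = ∅ := by
        rw [Set.eq_empty_iff_forall_notMem]
        intro ω hω
        obtain ⟨y, hy, _⟩ := hω
        exact hS ⟨y, hy⟩
      rw [this, measure_empty]
      exact zero_le
  -- bound each C k
  have hCk : ∀ k : ℕ, μ (C k) ≤ bnd := by
    intro k
    set c : ℝ := (k:ℝ)/n + ε with hc_def
    set S : Set ℝ := {y | c < F y} with hS_def
    by_cases hS : S.Nonempty
    · have hc0 : 0 < c := by
        have : (0:ℝ) ≤ (k:ℝ)/n := by positivity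
        rw [hc_def]; linarith
      obtain ⟨w, hw⟩ := hFbot c hc0
      have hbdd : BddBelow S := by
        refine ⟨w, fun y hy => ?_⟩
        by_contra hyw
        push_neg at hyw
        exact absurd (lt_of_le_of_lt (hFmono hyw.le) hw) (not_lt.2 (le_of_lt hy))
      set T : ℝ := sInf S with hT_def
      have hupp : ∀ y, T < y → y ∈ S := by
        intro y hy
        obtain ⟨y', hy'S, hyy'⟩ := exists_lt_of_csInf_lt hS hy
        exact lt_of_lt_of_le hy'S (hFmono hyy'.le)
      have hchern : ∀ z, z ∈ S →
          μ {ω | (∑ i, if Z i ω ≤ z then (1:ℝ) else 0) ≤ (k:ℝ)} ≤ bnd := by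
        intro z hz
        apply hdown z k
        have hz' : c < F z := hz
        have : (n:ℝ) * (c - ε) < n * (F z - ε) := by
          apply mul_lt_mul_of_pos_left _ hn'
          linarith
        calc (k:ℝ) = n * (c - ε) := by rw [hc_def]; field_simp; ring
          _ < n * (F z - ε) := this
      by_cases hT : T ∈ S
      · refine le_trans (measure_mono ?_) (hchern T hT)
        intro ω hω
        obtain ⟨y, hyS, hyk⟩ := hω
        have hyT : T ≤ y := csInf_le hbdd hyS
        exact le_trans (hSmono ω hyT) hyk
      · set A : ℕ → Set Ω := fun m =>
          {ω | (∑ i, if Z i ω ≤ T + 1/(m+1) then (1:ℝ) else 0) ≤ (k:ℝ)} with hA_def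
        have hAmono : Monotone A := by
          intro a b hab ω hω
          refine le_trans (hSmono ω ?_) hω
          have : (1:ℝ)/(b+1) ≤ 1/(a+1) := by
            apply one_div_le_one_div_of_le (by positivity)
            exact_mod_cast add_le_add_left (Nat.cast_le.2 hab) 1
          linarith
        have hsub : C k ⊆ ⋃ m, A m := by
          intro ω hω
          obtain ⟨y, hyS, hyk⟩ := hω
          have hyT : T < y :=
            lt_of_le_of_ne (csInf_le hbdd hyS) (fun h => hT (by rw [h]; exact hyS))
          obtain ⟨m, hm⟩ := exists_nat_one_div_lt (sub_pos.2 hyT)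
          refine Set.mem_iUnion.2 ⟨m, ?_⟩
          refine le_trans (hSmono ω ?_) hyk
          have : (1:ℝ)/(m+1) < y - T := hm
          linarith
        have htend := tendsto_measure_iUnion_atTop (μ := μ) hAmono
        refine le_trans (measure_mono hsub) (le_of_tendsto htend ?_)
        filter_upwards with m
        apply hchern
        apply hupp
        have : (0:ℝ) < 1/((m:ℝ)+1) := by positivity
        linarith
    · have : C k = ∅ := by
        rw [Set.eq_empty_iff_forall_notMem]
        intro ω hω
        obtain ⟨y, hy, _⟩ := hω
        exact hS ⟨y, hy⟩
      rw [this, measure_empty]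
      exact zero_le
  -- put it together
  have hmain : μ {ω | ε < ⨆ y : ℝ,
      |(1 / (n : ℝ)) * (∑ i, if Z i ω ≤ y then (1 : ℝ) else 0) - F y|}
      ≤ (n+1 : ℕ) * (2 * bnd) := by
    calc μ _ ≤ μ (⋃ k ∈ Finset.range (n+1), (B k ∪ C k)) := measure_mono hcover
      _ ≤ ∑ k ∈ Finset.range (n+1), μ (B k ∪ C k) := measure_biUnion_finset_le _ _
      _ ≤ ∑ k ∈ Finset.range (n+1), (2 * bnd) := by
          apply Finset.sum_le_sum
          intro k hk
          have hkn : k ≤ n := Nat.lt_succ_iff.1 (Finset.mem_range.1 hk)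
          calc μ (B k ∪ C k) ≤ μ (B k) + μ (C k) := measure_union_le _ _
            _ ≤ bnd + bnd := add_le_add (hBk k hkn) (hCk k)
            _ = 2 * bnd := by rw [two_mul]
      _ = (n+1 : ℕ) * (2 * bnd) := by
          rw [Finset.sum_const, Finset.card_range, nsmul_eq_mul]
  have hne : ((n+1 : ℕ) : ℝ≥0∞) * (2 * bnd) ≠ ⊤ := by
    apply ENNReal.mul_ne_top (by simp)
    exact ENNReal.mul_ne_top (by simp) ENNReal.ofReal_ne_top
  calc (μ _).toReal ≤ (((n+1 : ℕ) : ℝ≥0∞) * (2 * bnd)).toReal :=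
        ENNReal.toReal_mono hne hmain
    _ = 2 * ((n : ℝ) + 1) * Real.exp (-2 * (n : ℝ) * ε ^ 2) := by
        rw [ENNReal.toReal_mul, ENNReal.toReal_mul, hbnd_def,
          ENNReal.toReal_ofReal (Real.exp_nonneg _), ENNReal.toReal_natCast,
          ENNReal.toReal_ofNat]
        push_cast
        ring
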